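/- If A and B are idempotent complete, then the Eilenberg–Moore category of coalgebras for the comonad K_T = forget_T ⋙ free_T on Alg(T) is equivalent to Coalg(W), and the Eilenberg–Moore category of algebras for the monad M_W = forget_W ⋙ cofree_W on Coalg(W) is equivalent to Alg(T). (In other words, applying the Eilenberg–Moore coalgebra construction after the Eilenberg–Moore algebra construction, or in the opposite order, to any adjunction yields the same pair of categories: the nucleus of the adjunction.) -/

import Mathlib

open CategoryTheory Category

universe v₁ v₂ u₁ u₂

namespace NucleusAux

/-- splitting data for an idempotent -/
structure Split {C : Type*} [Category C] {b : C} (p : b ⟶ b) where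
  Y : C
  i : Y ⟶ b
  r : b ⟶ Y
  ir : i ≫ r = 𝟙 Y
  ri : r ≫ i = p

noncomputable def splitOf {C : Type*} [Category C] [IsIdempotentComplete C]
    {b : C} (p : b ⟶ b) (hp : p ≫ p = p) : Split p := by
  have h := IsIdempotentComplete.idempotents_split b p hp
  exact ⟨h.choose, h.choose_spec.choose, h.choose_spec.choose_spec.choose,
    h.choose_spec.choose_spec.choose_spec.1, h.choose_spec.choose_spec.choose_spec.2⟩

lemma Split.ip {C : Type*} [Category C] {b : C} {p : b ⟶ b} (s : Split p) :
    s.i ≫ p = s.i := by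
  have h : s.i ≫ s.r ≫ s.i = s.i := by rw [← assoc, s.ir, id_comp]
  rw [s.ri] at h; exact h

lemma Split.pr {C : Type*} [Category C] {b : C} {p : b ⟶ b} (s : Split p) :
    p ≫ s.r = s.r := by
  have h : (s.r ≫ s.i) ≫ s.r = s.r := by rw [assoc, s.ir, comp_id]
  rw [s.ri] at h; exact h

variable {A : Type u₁} {B : Type u₂} [Category.{v₁} A] [Category.{v₂} B]
variable {L : A ⥤ B} {R : B ⥤ A} (adj : L ⊣ R)

/-- unit with syntactically uniform type -/
def η' (x : A) : x ⟶ R.obj (L.obj x) := adj.unit.app x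

/-- counit with syntactically uniform type -/
def ε' (y : B) : L.obj (R.obj y) ⟶ y := adj.counit.app y

lemma η'_nat {x y : A} (f : x ⟶ y) : f ≫ η' adj y = η' adj x ≫ R.map (L.map f) := by
  simpa [η'] using adj.unit_naturality f

lemma ε'_nat {x y : B} (f : x ⟶ y) : L.map (R.map f) ≫ ε' adj y = ε' adj x ≫ f := by
  simpa [ε'] using adj.counit_naturality f

lemma tri_L (x : A) : L.map (η' adj x) ≫ ε' adj (L.obj x) = 𝟙 (L.obj x) := by
  simpa [η', ε'] using adj.left_triangle_components x

lemma tri_R (y : B) : η' adj (R.obj y) ≫ R.map (ε' adj y) = 𝟙 (R.obj y) := by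
  simpa [η', ε'] using adj.right_triangle_components y

end NucleusAux

namespace NucleusAux
variable {A : Type u₁} {B : Type u₂} [Category.{v₁} A] [Category.{v₂} B]
variable {L : A ⥤ B} {R : B ⥤ A} (adj : L ⊣ R)

section RawOne

variable {a a' a'' : A}

/-- the idempotent on `L a` associated to a `K`-coalgebra -/
def eK (σ : a ⟶ R.obj (L.obj a)) : L.obj a ⟶ L.obj a :=
  L.map σ ≫ ε' adj (L.obj a)

section
variable (α : R.obj (L.obj a) ⟶ a) (σ : a ⟶ R.obj (L.obj a))
variable (h3 : R.map (L.map σ) ≫ R.map (ε' adj (L.obj a)) = α ≫ σ)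
variable (h4 : σ ≫ α = 𝟙 a)
variable (h5 : σ ≫ R.map (L.map (η' adj a)) = σ ≫ R.map (L.map σ))

include h3 in
lemma R_eK : R.map (eK adj σ) = α ≫ σ := by
  rw [eK, R.map_comp, h3]

include h3 h4 in
lemma eK_idem : eK adj σ ≫ eK adj σ = eK adj σ := by
  nth_rewrite 1 [eK]
  rw [assoc, ← ε'_nat adj (eK adj σ), R_eK adj α σ h3, L.map_comp, ← assoc, ← assoc,
    ← L.map_comp, h4, L.map_id, id_comp, eK]

include h3 h4 in
lemma Lσ_LReK : L.map σ ≫ L.map (R.map (eK adj σ)) = L.map σ := by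
  rw [R_eK adj α σ h3, ← L.map_comp, ← assoc, h4, id_comp]

include h5 in
lemma eK_Lσ : eK adj σ ≫ L.map σ = eK adj σ ≫ L.map (η' adj a) := by
  rw [eK, assoc, ← ε'_nat adj (L.map σ), ← assoc, ← L.map_comp, ← h5,
    L.map_comp, assoc, ε'_nat adj (L.map (η' adj a)), ← assoc, ← eK]

variable (s : Split (eK adj σ))

/-- the coalgebra structure on the splitting -/
def βK : s.Y ⟶ L.obj (R.obj s.Y) := s.i ≫ L.map σ ≫ L.map (R.map s.r)

lemma βK_counit : βK adj σ s ≫ ε' adj s.Y = 𝟙 s.Y := by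
  have hip := s.ip
  simp only [eK] at hip
  rw [← assoc] at hip
  rw [βK, assoc, assoc, ε'_nat adj s.r, ← assoc, ← assoc, hip, s.ir]

include h3 h4 h5 in
lemma βK_coassoc :
    βK adj σ s ≫ L.map (η' adj (R.obj s.Y)) =
      βK adj σ s ≫ L.map (R.map (βK adj σ s)) := by
  conv_lhs => rw [βK, assoc, assoc, ← L.map_comp (R.map s.r) (η' adj (R.obj s.Y)),
    η'_nat adj (R.map s.r), L.map_comp, ← assoc (L.map σ), ← L.map_comp σ (η' adj _),
    η'_nat adj σ, L.map_comp, assoc]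
  conv_rhs => rw [βK]
  conv_rhs => simp only [R.map_comp, L.map_comp, assoc]
  conv_rhs => rw [← assoc (L.map (R.map s.r)) (L.map (R.map s.i)),
    ← L.map_comp (R.map s.r) (R.map s.i), ← R.map_comp s.r s.i, s.ri]
  rw [reassoc_of% (Lσ_LReK adj α σ h3 h4)]
  conv_lhs => rw [← s.ip, assoc, ← reassoc_of% (eK_Lσ adj σ h5), reassoc_of% s.ip]

end

section
variable (α : R.obj (L.obj a) ⟶ a) (σ : a ⟶ R.obj (L.obj a)) (s : Split (eK adj σ))
variable (α' : R.obj (L.obj a') ⟶ a') (σ' : a' ⟶ R.obj (L.obj a')) (s' : Split (eK adj σ'))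
variable (σ'' : a'' ⟶ R.obj (L.obj a'')) (s'' : Split (eK adj σ''))
variable (f : a ⟶ a') (g : a' ⟶ a'')

section
variable (hfco : σ ≫ R.map (L.map f) = f ≫ σ')

include hfco in
lemma Lf_eK : L.map f ≫ eK adj σ' = eK adj σ ≫ L.map f := by
  rw [eK, eK, ← assoc, ← L.map_comp, ← hfco, L.map_comp, assoc, assoc,
    ε'_nat adj (L.map f)]

/-- the image of a morphism under `G1` -/
def mapB : s.Y ⟶ s'.Y := s.i ≫ L.map f ≫ s'.r

variable (h3 : R.map (L.map σ) ≫ R.map (ε' adj (L.obj a)) = α ≫ σ)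
variable (h4 : σ ≫ α = 𝟙 a)

include h3 h4 hfco in
lemma mapB_coalg :
    βK adj σ s ≫ L.map (R.map (mapB adj σ s σ' s' f)) = mapB adj σ s σ' s' f ≫ βK adj σ' s' := by
  have hq : L.map σ ≫ L.map (R.map (L.map f)) = L.map f ≫ L.map σ' := by
    rw [← L.map_comp, hfco, L.map_comp]
  conv_lhs => rw [βK, mapB]
  conv_lhs => simp only [R.map_comp, L.map_comp, assoc]
  conv_lhs => rw [← assoc (L.map (R.map s.r)) (L.map (R.map s.i)),
    ← L.map_comp (R.map s.r) (R.map s.i), ← R.map_comp s.r s.i, s.ri]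
  rw [reassoc_of% (Lσ_LReK adj α σ h3 h4), reassoc_of% hq]
  conv_rhs => rw [mapB, βK, assoc, assoc, reassoc_of% s'.ri,
    reassoc_of% (Lf_eK adj σ σ' f hfco), reassoc_of% s.ip]

end

lemma mapB_id : mapB adj σ s σ s (𝟙 a) = 𝟙 s.Y := by
  rw [mapB, L.map_id, id_comp, s.ir]

section
variable (hfco : σ ≫ R.map (L.map f) = f ≫ σ')

include hfco in
lemma mapB_comp :
    mapB adj σ s σ'' s'' (f ≫ g) = mapB adj σ s σ' s' f ≫ mapB adj σ' s' σ'' s'' g := by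
  conv_rhs => rw [mapB, mapB, assoc, assoc, reassoc_of% s'.ri,
    reassoc_of% (Lf_eK adj σ σ' f hfco), reassoc_of% s.ip]
  rw [mapB, L.map_comp, assoc]

end
end

end RawOne

end NucleusAux

namespace NucleusAux
variable {A : Type u₁} {B : Type u₂} [Category.{v₁} A] [Category.{v₂} B]
variable {L : A ⥤ B} {R : B ⥤ A} (adj : L ⊣ R)

section RawOneIso

variable {a a' : A}
variable (α : R.obj (L.obj a) ⟶ a) (σ : a ⟶ R.obj (L.obj a)) (s : Split (eK adj σ))
variable (α' : R.obj (L.obj a') ⟶ a') (σ' : a' ⟶ R.obj (L.obj a')) (s' : Split (eK adj σ'))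
variable (h3 : R.map (L.map σ) ≫ R.map (ε' adj (L.obj a)) = α ≫ σ)
variable (h4 : σ ≫ α = 𝟙 a)

/-- unit iso component, forward -/
def uK : a ⟶ R.obj s.Y := σ ≫ R.map s.r

/-- unit iso component, backward -/
def vK : R.obj s.Y ⟶ a := R.map s.i ≫ α

include h3 h4 in
lemma uK_vK : uK adj σ s ≫ vK adj α σ s = 𝟙 a := by
  rw [uK, vK, assoc, ← assoc (R.map s.r), ← R.map_comp, s.ri, R_eK adj α σ h3]
  simp only [assoc]
  rw [reassoc_of% h4, h4]

include h3 in
lemma vK_uK : vK adj α σ s ≫ uK adj σ s = 𝟙 (R.obj s.Y) := by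
  have hip := reassoc_of% s.ip
  simp only [eK] at hip
  rw [vK, uK, assoc, ← reassoc_of% h3, ← R.map_comp, ← R.map_comp, ← R.map_comp,
    ← assoc (L.map σ), hip, s.ir, R.map_id]

include h3 in
lemma uK_alg :
    R.map (L.map (uK adj σ s)) ≫ R.map (ε' adj s.Y) = α ≫ uK adj σ s := by
  rw [uK, L.map_comp, R.map_comp, assoc, ← R.map_comp, ε'_nat adj s.r, R.map_comp,
    reassoc_of% h3]

include h3 h4 in
lemma uK_coalg :
    σ ≫ R.map (L.map (uK adj σ s)) = uK adj σ s ≫ R.map (βK adj σ s) := by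
  conv_rhs => rw [uK, βK, assoc]
  conv_rhs => simp only [R.map_comp, assoc]
  conv_rhs => rw [← assoc (R.map s.r), ← R.map_comp, s.ri, R_eK adj α σ h3,
    assoc, reassoc_of% h4]
  rw [uK, L.map_comp, R.map_comp]

section
variable (f : a ⟶ a') (hfco : σ ≫ R.map (L.map f) = f ≫ σ')

include h3 h4 hfco in
lemma uK_nat :
    f ≫ uK adj σ' s' = uK adj σ s ≫ R.map (mapB adj σ s σ' s' f) := by
  conv_rhs => rw [uK, mapB, assoc]
  conv_rhs => simp only [R.map_comp, assoc]
  conv_rhs => rw [← assoc (R.map s.r), ← R.map_comp, s.ri, R_eK adj α σ h3,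
    assoc, reassoc_of% h4, reassoc_of% hfco]
  rw [uK]

end
end RawOneIso

section RawOneCounitIso

variable {b b₂ : B} (β : b ⟶ L.obj (R.obj b)) (β₂ : b₂ ⟶ L.obj (R.obj b₂))
variable (k1 : β ≫ ε' adj b = 𝟙 b)
variable (k2 : β ≫ L.map (η' adj (R.obj b)) = β ≫ L.map (R.map β))

lemma h3R : R.map (L.map (R.map β)) ≫ R.map (ε' adj (L.obj (R.obj b)))
    = R.map (ε' adj b) ≫ R.map β := by
  rw [← R.map_comp, ← R.map_comp, ε'_nat adj β]

include k1 in
lemma h4R : R.map β ≫ R.map (ε' adj b) = 𝟙 (R.obj b) := by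
  rw [← R.map_comp, k1, R.map_id]

include k2 in
lemma h5R : R.map β ≫ R.map (L.map (η' adj (R.obj b)))
    = R.map β ≫ R.map (L.map (R.map β)) := by
  rw [← R.map_comp, ← R.map_comp, k2]

lemma eK_Rβ : eK adj (R.map β) = ε' adj b ≫ β := by
  rw [eK, ε'_nat adj β]

variable (s : Split (eK adj (R.map β))) (s₂ : Split (eK adj (R.map β₂)))

/-- counit iso component, forward -/
def wK : s.Y ⟶ b := s.i ≫ ε' adj b

/-- counit iso component, backward -/
def wK' : b ⟶ s.Y := β ≫ s.r

lemma wK_wK' : wK adj β s ≫ wK' adj β s = 𝟙 s.Y := by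
  rw [wK, wK', assoc, ← assoc (ε' adj b), ← eK_Rβ, reassoc_of% s.ip, s.ir]

include k1 in
lemma wK'_wK : wK' adj β s ≫ wK adj β s = 𝟙 b := by
  rw [wK', wK, assoc, reassoc_of% s.ri, eK_Rβ, assoc, reassoc_of% k1, k1]

include k1 in
lemma wK_coalg :
    βK adj (R.map β) s ≫ L.map (R.map (wK adj β s)) = wK adj β s ≫ β := by
  conv_lhs => rw [βK, wK]
  conv_lhs => simp only [R.map_comp, L.map_comp, assoc]
  conv_lhs => rw [← assoc (L.map (R.map s.r)), ← L.map_comp, ← R.map_comp, s.ri,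
    reassoc_of% (Lσ_LReK adj (R.map (ε' adj b)) (R.map β) (h3R adj β) (h4R adj β k1)),
    ← L.map_comp, ← R.map_comp, k1, R.map_id, L.map_id, comp_id]
  conv_rhs => rw [wK, assoc, ← eK_Rβ, s.ip]

section
variable (k1₂ : β₂ ≫ ε' adj b₂ = 𝟙 b₂)
variable (g : b ⟶ b₂) (hg : β ≫ L.map (R.map g) = g ≫ β₂)

include k1₂ hg in
lemma wK_nat :
    mapB adj (R.map β) s (R.map β₂) s₂ (R.map g) ≫ wK adj β₂ s₂
      = wK adj β s ≫ g := by
  have hq : eK adj (R.map β₂) ≫ ε' adj b₂ = ε' adj b₂ := by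
    rw [eK_Rβ, assoc, k1₂, comp_id]
  rw [mapB, wK, wK, assoc, assoc, reassoc_of% s₂.ri, hq, ε'_nat adj g, ← assoc]

end
end RawOneCounitIso

end NucleusAux

namespace NucleusAux
variable {A : Type u₁} {B : Type u₂} [Category.{v₁} A] [Category.{v₂} B]
variable {L : A ⥤ B} {R : B ⥤ A} (adj : L ⊣ R)

section AssemblyOne

lemma mkKcounit (Z : Monad.Algebra adj.toMonad)
    (g : Z ⟶ adj.toMonad.adj.toComonad.obj Z)
    (hc : g.f ≫ Z.a = 𝟙 Z.A) :
    g ≫ adj.toMonad.adj.toComonad.ε.app Z = 𝟙 Z := by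
  ext; exact (Monad.Algebra.comp_f _ _).trans (by simpa using hc)

lemma mkKcoassoc (Z : Monad.Algebra adj.toMonad)
    (g : Z ⟶ adj.toMonad.adj.toComonad.obj Z)
    (hc : g.f ≫ R.map (L.map (adj.unit.app Z.A)) = g.f ≫ R.map (L.map g.f)) :
    g ≫ adj.toMonad.adj.toComonad.δ.app Z =
      g ≫ adj.toMonad.adj.toComonad.map g := by
  ext; erw [Monad.Algebra.comp_f, Monad.Algebra.comp_f]; simp; exact hc


-- extraction lemmas
lemma hXalg (X : Comonad.Coalgebra (adj.toMonad.adj.toComonad)) :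
    R.map (L.map X.a.f) ≫ R.map (ε' adj (L.obj X.A.A)) = X.A.a ≫ X.a.f := by
  exact X.a.h

lemma hXcounit (X : Comonad.Coalgebra (adj.toMonad.adj.toComonad)) :
    X.a.f ≫ X.A.a = 𝟙 X.A.A := by
  have := congrArg Monad.Algebra.Hom.f X.counit; simp at this; exact this

lemma hXcoassoc (X : Comonad.Coalgebra (adj.toMonad.adj.toComonad)) :
    X.a.f ≫ R.map (L.map (η' adj X.A.A)) = X.a.f ≫ R.map (L.map X.a.f) := by
  have := congrArg Monad.Algebra.Hom.f X.coassoc; simp at this; exact this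

lemma hfcoX {X X' : Comonad.Coalgebra (adj.toMonad.adj.toComonad)} (f : X ⟶ X') :
    X.a.f ≫ R.map (L.map f.f.f) = f.f.f ≫ X'.a.f := by
  have := congrArg Monad.Algebra.Hom.f f.h; exact this

variable [IsIdempotentComplete B]

/-- the chosen splitting for a `K`-coalgebra -/
noncomputable def SX (X : Comonad.Coalgebra (adj.toMonad.adj.toComonad)) :
    Split (eK adj X.a.f) :=
  splitOf _ (eK_idem adj X.A.a X.a.f (hXalg adj X) (hXcounit adj X))

/-- the functor from `K`-coalgebras to `W`-coalgebras -/
noncomputable def G1 :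
    Comonad.Coalgebra (adj.toMonad.adj.toComonad) ⥤ Comonad.Coalgebra adj.toComonad where
  obj X :=
    { A := (SX adj X).Y
      a := βK adj X.a.f (SX adj X)
      counit := βK_counit adj X.a.f (SX adj X)
      coassoc := βK_coassoc adj X.A.a X.a.f (hXalg adj X) (hXcounit adj X)
        (hXcoassoc adj X) (SX adj X) }
  map {X X'} f :=
    { f := mapB adj X.a.f (SX adj X) X'.a.f (SX adj X') f.f.f
      h := mapB_coalg adj X.A.a X.a.f (SX adj X) X'.a.f (SX adj X') f.f.f (hfcoX adj f)
        (hXalg adj X) (hXcounit adj X) }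
  map_id X := by
    ext
    exact mapB_id adj X.a.f (SX adj X)
  map_comp {X X' X''} f g := by
    ext
    exact mapB_comp adj X.a.f (SX adj X) X'.a.f (SX adj X') X''.a.f (SX adj X'')
      f.f.f g.f.f (hfcoX adj f)

/-- the functor from `W`-coalgebras to `K`-coalgebras -/
def F1 :
    Comonad.Coalgebra adj.toComonad ⥤ Comonad.Coalgebra (adj.toMonad.adj.toComonad) where
  obj Y :=
    { A :=
      { A := R.obj Y.A
        a := R.map (ε' adj Y.A)
        unit := tri_R adj Y.A
        assoc := by
          show R.map (ε' adj (L.obj (R.obj Y.A))) ≫ R.map (ε' adj Y.A) =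
            R.map (L.map (R.map (ε' adj Y.A))) ≫ R.map (ε' adj Y.A)
          rw [← R.map_comp, ← R.map_comp, ε'_nat adj (ε' adj Y.A)] }
      a :=
      { f := R.map Y.a
        h := h3R adj Y.a }
      counit := mkKcounit adj _ _ (h4R adj Y.a Y.counit)
      coassoc := mkKcoassoc adj _ _ (h5R adj Y.a Y.coassoc) }
  map {Y Y'} g :=
    { f :=
      { f := R.map g.f
        h := by
          show R.map (L.map (R.map g.f)) ≫ R.map (ε' adj Y'.A) =
            R.map (ε' adj Y.A) ≫ R.map g.f
          rw [← R.map_comp, ← R.map_comp, ε'_nat adj g.f] }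
      h := by
        ext
        show R.map Y.a ≫ R.map (L.map (R.map g.f)) = R.map g.f ≫ R.map Y'.a
        exact (R.map_comp _ _).symm.trans ((congrArg R.map g.h).trans (R.map_comp _ _)) }
  map_id Y := by ext; exact R.map_id Y.A
  map_comp g g' := by ext; exact R.map_comp g.f g'.f

end AssemblyOne

end NucleusAux

namespace NucleusAux
variable {A : Type u₁} {B : Type u₂} [Category.{v₁} A] [Category.{v₂} B]
variable {L : A ⥤ B} {R : B ⥤ A} (adj : L ⊣ R)
variable [IsIdempotentComplete B]

/-- unit iso for the first equivalence -/
noncomputable def unitIso1 :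
    𝟭 (Comonad.Coalgebra (adj.toMonad.adj.toComonad)) ≅ G1 adj ⋙ F1 adj :=
  NatIso.ofComponents
    (fun X => Comonad.Coalgebra.isoMk
      (Monad.Algebra.isoMk
        ⟨uK adj X.a.f (SX adj X), vK adj X.A.a X.a.f (SX adj X),
          uK_vK adj X.A.a X.a.f (SX adj X) (hXalg adj X) (hXcounit adj X),
          vK_uK adj X.A.a X.a.f (SX adj X) (hXalg adj X)⟩
        (uK_alg adj X.A.a X.a.f (SX adj X) (hXalg adj X)))
      (by
        ext
        exact uK_coalg adj X.A.a X.a.f (SX adj X) (hXalg adj X) (hXcounit adj X)))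
    (fun {X X'} f => by
      ext
      exact uK_nat adj X.A.a X.a.f (SX adj X) X'.a.f (SX adj X') (hXalg adj X)
        (hXcounit adj X) f.f.f (hfcoX adj f))

/-- counit iso for the first equivalence -/
noncomputable def counitIso1 :
    F1 adj ⋙ G1 adj ≅ 𝟭 (Comonad.Coalgebra adj.toComonad) :=
  NatIso.ofComponents
    (fun Y => Comonad.Coalgebra.isoMk
      ⟨wK adj Y.a (SX adj ((F1 adj).obj Y)), wK' adj Y.a (SX adj ((F1 adj).obj Y)),
        wK_wK' adj Y.a (SX adj ((F1 adj).obj Y)),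
        wK'_wK adj Y.a Y.counit (SX adj ((F1 adj).obj Y))⟩
      (wK_coalg adj Y.a Y.counit (SX adj ((F1 adj).obj Y))))
    (fun {Y Y₂} g => by
      ext
      exact wK_nat adj Y.a Y₂.a (SX adj ((F1 adj).obj Y)) (SX adj ((F1 adj).obj Y₂))
        Y₂.counit g.f g.h)

/-- the first equivalence -/
noncomputable def equiv1 :
    Comonad.Coalgebra (adj.toMonad.adj.toComonad) ≌ Comonad.Coalgebra adj.toComonad :=
  CategoryTheory.Equivalence.mk (G1 adj) (F1 adj) (unitIso1 adj) (counitIso1 adj)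

end NucleusAux

namespace NucleusAux
variable {A : Type u₁} {B : Type u₂} [Category.{v₁} A] [Category.{v₂} B]
variable {L : A ⥤ B} {R : B ⥤ A} (adj : L ⊣ R)

section RawTwo

variable {b b' b'' : B}

/-- the idempotent on `R b` associated to an `M`-algebra -/
def eM (τ : L.obj (R.obj b) ⟶ b) : R.obj b ⟶ R.obj b :=
  η' adj (R.obj b) ≫ R.map τ

section
variable (τ : L.obj (R.obj b) ⟶ b) (β : b ⟶ L.obj (R.obj b))
variable (k3 : L.map (η' adj (R.obj b)) ≫ L.map (R.map τ) = τ ≫ β)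
variable (k4 : β ≫ τ = 𝟙 b)
variable (k5 : L.map (R.map (ε' adj b)) ≫ τ = L.map (R.map τ) ≫ τ)

include k3 in
lemma L_eM : L.map (eM adj τ) = τ ≫ β := by
  rw [eM, L.map_comp, k3]

include k3 k4 in
lemma eM_idem : eM adj τ ≫ eM adj τ = eM adj τ := by
  nth_rewrite 2 [eM]
  rw [← assoc, η'_nat adj (eM adj τ), L_eM adj τ β k3, R.map_comp]
  simp only [assoc]
  rw [← R.map_comp β τ, k4, R.map_id, comp_id]
  rfl

include k3 k4 in
lemma RLeM_Rτ : R.map (L.map (eM adj τ)) ≫ R.map τ = R.map τ := by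
  rw [L_eM adj τ β k3, R.map_comp, assoc, ← R.map_comp, k4, R.map_id, comp_id]

include k3 k4 in
lemma LeM_τ : L.map (eM adj τ) ≫ τ = τ := by
  rw [L_eM adj τ β k3, assoc, k4, comp_id]

include k5 in
lemma Rτ_eM : R.map τ ≫ eM adj τ = R.map (ε' adj b) ≫ eM adj τ := by
  rw [eM, ← assoc, η'_nat adj (R.map τ), assoc, ← R.map_comp (L.map (R.map τ)) τ, ← k5,
    R.map_comp, ← assoc, ← η'_nat adj (R.map (ε' adj b)), assoc]

variable (t : Split (eM adj τ))

/-- the algebra structure on the splitting -/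
def αM : R.obj (L.obj t.Y) ⟶ t.Y := R.map (L.map t.i) ≫ R.map τ ≫ t.r

lemma αM_unit : η' adj t.Y ≫ αM adj τ t = 𝟙 t.Y := by
  have hip := t.ip
  simp only [eM] at hip
  rw [← assoc] at hip
  rw [αM, ← assoc, ← η'_nat adj t.i, ← assoc, hip, t.ir]

include k3 k4 k5 in
lemma αM_assoc :
    R.map (ε' adj (L.obj t.Y)) ≫ αM adj τ t =
      R.map (L.map (αM adj τ t)) ≫ αM adj τ t := by
  have hnat : R.map (L.map (R.map (ε' adj b))) ≫ R.map (ε' adj b)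
      = R.map (ε' adj (L.obj (R.obj b))) ≫ R.map (ε' adj b) := by
    rw [← R.map_comp, ← R.map_comp, ε'_nat adj (ε' adj b)]
  conv_lhs => rw [αM, ← assoc, ← R.map_comp, ← ε'_nat adj (L.map t.i), R.map_comp, assoc]
  conv_rhs => rw [αM]
  conv_rhs => simp only [L.map_comp, R.map_comp, assoc]
  conv_rhs => rw [← assoc (R.map (L.map t.r)) (R.map (L.map t.i)),
    ← R.map_comp (L.map t.r) (L.map t.i), ← L.map_comp t.r t.i, t.ri]
  rw [reassoc_of% (RLeM_Rτ adj τ β k3 k4)]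
  conv_rhs => rw [← assoc (R.map (L.map (R.map τ))), ← R.map_comp, ← k5, R.map_comp, assoc]
  rw [← t.pr, reassoc_of% (Rτ_eM adj τ k5), reassoc_of% hnat]

end

section
variable (τ : L.obj (R.obj b) ⟶ b) (β : b ⟶ L.obj (R.obj b)) (t : Split (eM adj τ))
variable (τ' : L.obj (R.obj b') ⟶ b') (β' : b' ⟶ L.obj (R.obj b')) (t' : Split (eM adj τ'))
variable (τ'' : L.obj (R.obj b'') ⟶ b'') (t'' : Split (eM adj τ''))
variable (g : b ⟶ b') (g₂ : b' ⟶ b'')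

section
variable (hgal : L.map (R.map g) ≫ τ' = τ ≫ g)

include hgal in
lemma Rg_eM : R.map g ≫ eM adj τ' = eM adj τ ≫ R.map g := by
  rw [eM, eM, ← assoc, η'_nat adj (R.map g), assoc, ← R.map_comp, hgal, R.map_comp, ← assoc]

/-- the image of a morphism under `G2` -/
def mapA : t.Y ⟶ t'.Y := t.i ≫ R.map g ≫ t'.r

variable (k3' : L.map (η' adj (R.obj b')) ≫ L.map (R.map τ') = τ' ≫ β')
variable (k4' : β' ≫ τ' = 𝟙 b')

include k3' k4' hgal in
lemma mapA_alg :
    R.map (L.map (mapA adj τ t τ' t' g)) ≫ αM adj τ' t' =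
      αM adj τ t ≫ mapA adj τ t τ' t' g := by
  have hq : R.map (L.map (R.map g)) ≫ R.map τ' = R.map τ ≫ R.map g := by
    rw [← R.map_comp, hgal, R.map_comp]
  conv_lhs => rw [αM, mapA]
  conv_lhs => simp only [R.map_comp, L.map_comp, assoc]
  conv_lhs => rw [← assoc (R.map (L.map t'.r)) (R.map (L.map t'.i)),
    ← R.map_comp (L.map t'.r) (L.map t'.i), ← L.map_comp t'.r t'.i, t'.ri]
  rw [reassoc_of% (RLeM_Rτ adj τ' β' k3' k4'), reassoc_of% hq]
  conv_rhs => rw [αM, mapA]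
  conv_rhs => simp only [assoc]
  conv_rhs => rw [reassoc_of% t.ri, ← reassoc_of% (Rg_eM adj τ τ' g hgal), t'.pr]

end

lemma mapA_id : mapA adj τ t τ t (𝟙 b) = 𝟙 t.Y := by
  rw [mapA, R.map_id, id_comp, t.ir]

section
variable (hgal : L.map (R.map g) ≫ τ' = τ ≫ g)

include hgal in
lemma mapA_comp :
    mapA adj τ t τ'' t'' (g ≫ g₂) = mapA adj τ t τ' t' g ≫ mapA adj τ' t' τ'' t'' g₂ := by
  conv_rhs => rw [mapA, mapA, assoc, assoc, reassoc_of% t'.ri,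
    reassoc_of% (Rg_eM adj τ τ' g hgal), reassoc_of% t.ip]
  rw [mapA, R.map_comp, assoc]

end
end

end RawTwo

section RawTwoIso

variable {b b' : B}
variable (τ : L.obj (R.obj b) ⟶ b) (β : b ⟶ L.obj (R.obj b)) (t : Split (eM adj τ))
variable (τ' : L.obj (R.obj b') ⟶ b') (β' : b' ⟶ L.obj (R.obj b')) (t' : Split (eM adj τ'))
variable (k3 : L.map (η' adj (R.obj b)) ≫ L.map (R.map τ) = τ ≫ β)
variable (k4 : β ≫ τ = 𝟙 b)

/-- unit iso component for the second equivalence, forward -/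
def uM : b ⟶ L.obj t.Y := β ≫ L.map t.r

/-- unit iso component for the second equivalence, backward -/
def vM : L.obj t.Y ⟶ b := L.map t.i ≫ τ

include k3 k4 in
lemma uM_vM : uM adj τ β t ≫ vM adj τ t = 𝟙 b := by
  rw [uM, vM, assoc, ← assoc (L.map t.r), ← L.map_comp, t.ri, L_eM adj τ β k3]
  simp only [assoc]
  rw [reassoc_of% k4, k4]

include k3 in
lemma vM_uM : vM adj τ t ≫ uM adj τ β t = 𝟙 (L.obj t.Y) := by
  have hip := reassoc_of% t.ip
  simp only [eM] at hip
  rw [vM, uM, assoc, ← reassoc_of% k3, ← L.map_comp, ← L.map_comp, ← L.map_comp,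
    ← assoc (η' adj (R.obj b)), hip, t.ir, L.map_id]

section
variable (k2 : β ≫ L.map (η' adj (R.obj b)) = β ≫ L.map (R.map β))

include k2 in
lemma uM_coalg :
    β ≫ L.map (R.map (uM adj τ β t)) = uM adj τ β t ≫ L.map (η' adj t.Y) := by
  conv_rhs => rw [uM, assoc, ← L.map_comp t.r (η' adj t.Y), η'_nat adj t.r, L.map_comp,
    reassoc_of% k2]
  rw [uM, R.map_comp, L.map_comp]

end

include k3 k4 in
lemma uM_alg :
    L.map (R.map (uM adj τ β t)) ≫ L.map (αM adj τ t) = τ ≫ uM adj τ β t := by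
  conv_lhs => rw [uM, αM]
  conv_lhs => simp only [R.map_comp, L.map_comp, assoc]
  conv_lhs => rw [← assoc (L.map (R.map (L.map t.r))) (L.map (R.map (L.map t.i))),
    ← L.map_comp (R.map (L.map t.r)) (R.map (L.map t.i)),
    ← R.map_comp (L.map t.r) (L.map t.i), ← L.map_comp t.r t.i, t.ri,
    ← assoc (L.map (R.map (L.map (eM adj τ)))), ← L.map_comp, ← R.map_comp,
    LeM_τ adj τ β k3 k4, ← assoc (L.map (R.map β)), ← L.map_comp, ← R.map_comp, k4,
    R.map_id, L.map_id, id_comp]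
  conv_rhs => rw [uM, ← reassoc_of% (L_eM adj τ β k3), ← L.map_comp, t.pr]

section
variable (g : b ⟶ b')
variable (hgal : L.map (R.map g) ≫ τ' = τ ≫ g)
variable (hgco : β ≫ L.map (R.map g) = g ≫ β')

include k3 k4 hgco in
lemma uM_nat :
    g ≫ uM adj τ' β' t' = uM adj τ β t ≫ L.map (mapA adj τ t τ' t' g) := by
  conv_rhs => rw [uM, mapA]
  conv_rhs => simp only [L.map_comp, assoc]
  conv_rhs => rw [← assoc (L.map t.r) (L.map t.i), ← L.map_comp t.r t.i, t.ri,
    reassoc_of% (L_eM adj τ β k3), reassoc_of% hgco, reassoc_of% k4]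
  rw [uM]

end
end RawTwoIso

section RawTwoCounitIso

variable {a a' : A}
variable (α : R.obj (L.obj a) ⟶ a) (α' : R.obj (L.obj a') ⟶ a')
variable (h1 : η' adj a ≫ α = 𝟙 a)
variable (h2 : R.map (ε' adj (L.obj a)) ≫ α = R.map (L.map α) ≫ α)

lemma k3L : L.map (η' adj (R.obj (L.obj a))) ≫ L.map (R.map (L.map α)) =
    L.map α ≫ L.map (η' adj a) := by
  rw [← L.map_comp, ← L.map_comp, η'_nat adj α]

include h1 in
lemma k4L : L.map (η' adj a) ≫ L.map α = 𝟙 (L.obj a) := by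
  rw [← L.map_comp, h1, L.map_id]

include h2 in
lemma k5L : L.map (R.map (ε' adj (L.obj a))) ≫ L.map α
    = L.map (R.map (L.map α)) ≫ L.map α := by
  rw [← L.map_comp, ← L.map_comp, h2]

lemma eM_Lα : eM adj (L.map α) = α ≫ η' adj a := by
  rw [eM, ← η'_nat adj α]

variable (t : Split (eM adj (L.map α))) (t' : Split (eM adj (L.map α')))

/-- counit iso component for the second equivalence, forward -/
def wM : t.Y ⟶ a := t.i ≫ α

/-- counit iso component for the second equivalence, backward -/
def wM' : a ⟶ t.Y := η' adj a ≫ t.r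

lemma wM_wM' : wM adj α t ≫ wM' adj α t = 𝟙 t.Y := by
  rw [wM, wM', assoc, ← assoc α, ← eM_Lα, reassoc_of% t.ip, t.ir]

include h1 in
lemma wM'_wM : wM' adj α t ≫ wM adj α t = 𝟙 a := by
  rw [wM', wM, assoc, reassoc_of% t.ri, eM_Lα, assoc, reassoc_of% h1, h1]

include h1 in
lemma eM_α : eM adj (L.map α) ≫ α = α := by
  rw [eM_Lα, assoc, h1, comp_id]

include h1 in
lemma wM_alg :
    R.map (L.map (wM adj α t)) ≫ α = αM adj (L.map α) t ≫ wM adj α t := by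
  conv_rhs => rw [αM, wM]
  conv_rhs => simp only [assoc]
  conv_rhs => rw [reassoc_of% t.ri, eM_α adj α h1]
  rw [wM, L.map_comp, R.map_comp, assoc]

section
variable (h1' : η' adj a' ≫ α' = 𝟙 a')
variable (f : a ⟶ a') (hf : R.map (L.map f) ≫ α' = α ≫ f)

include h1' hf in
lemma wM_nat :
    mapA adj (L.map α) t (L.map α') t' (L.map f) ≫ wM adj α' t' = wM adj α t ≫ f := by
  rw [mapA, wM, wM, assoc, assoc, reassoc_of% t'.ri, eM_α adj α' h1', hf, ← assoc]

end
end RawTwoCounitIso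
end NucleusAux

namespace NucleusAux
variable {A : Type u₁} {B : Type u₂} [Category.{v₁} A] [Category.{v₂} B]
variable {L : A ⥤ B} {R : B ⥤ A} (adj : L ⊣ R)

section AssemblyTwo

-- extraction lemmas for `M`-algebras
lemma hXk3 (X : Monad.Algebra (adj.toComonad.adj.toMonad)) :
    L.map (η' adj (R.obj X.A.A)) ≫ L.map (R.map X.a.f) = X.a.f ≫ X.A.a := by
  exact X.a.h

lemma hXk4 (X : Monad.Algebra (adj.toComonad.adj.toMonad)) :
    X.A.a ≫ X.a.f = 𝟙 X.A.A := by
  have := congrArg Comonad.Coalgebra.Hom.f X.unit; simp at this; exact this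

lemma hXk5 (X : Monad.Algebra (adj.toComonad.adj.toMonad)) :
    L.map (R.map (ε' adj X.A.A)) ≫ X.a.f = L.map (R.map X.a.f) ≫ X.a.f := by
  have := congrArg Comonad.Coalgebra.Hom.f X.assoc; simp at this; exact this

lemma hgalX {X X' : Monad.Algebra (adj.toComonad.adj.toMonad)} (g : X ⟶ X') :
    L.map (R.map g.f.f) ≫ X'.a.f = X.a.f ≫ g.f.f := by
  have := congrArg Comonad.Coalgebra.Hom.f g.h; exact this

-- bridge lemmas for building `M`-algebra structure fields
lemma mkMunit (Z : Comonad.Coalgebra adj.toComonad)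
    (g : adj.toComonad.adj.toMonad.obj Z ⟶ Z)
    (hc : Z.a ≫ g.f = 𝟙 Z.A) :
    adj.toComonad.adj.toMonad.η.app Z ≫ g = 𝟙 Z := by
  ext; erw [Comonad.Coalgebra.comp_f]; simp; exact hc

lemma mkMassoc (Z : Comonad.Coalgebra adj.toComonad)
    (g : adj.toComonad.adj.toMonad.obj Z ⟶ Z)
    (hc : L.map (R.map (adj.counit.app Z.A)) ≫ g.f = L.map (R.map g.f) ≫ g.f) :
    adj.toComonad.adj.toMonad.μ.app Z ≫ g = adj.toComonad.adj.toMonad.map g ≫ g := by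
  ext; erw [Comonad.Coalgebra.comp_f, Comonad.Coalgebra.comp_f]; simp; exact hc

variable [IsIdempotentComplete A]

/-- the chosen splitting for an `M`-algebra -/
noncomputable def SX2 (X : Monad.Algebra (adj.toComonad.adj.toMonad)) :
    Split (eM adj X.a.f) :=
  splitOf _ (eM_idem adj X.a.f X.A.a (hXk3 adj X) (hXk4 adj X))

/-- the functor from `M`-algebras to `T`-algebras -/
noncomputable def G2 :
    Monad.Algebra (adj.toComonad.adj.toMonad) ⥤ Monad.Algebra adj.toMonad where
  obj X :=
    { A := (SX2 adj X).Y
      a := αM adj X.a.f (SX2 adj X)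
      unit := αM_unit adj X.a.f (SX2 adj X)
      assoc := αM_assoc adj X.a.f X.A.a (hXk3 adj X) (hXk4 adj X) (hXk5 adj X) (SX2 adj X) }
  map {X X'} g :=
    { f := mapA adj X.a.f (SX2 adj X) X'.a.f (SX2 adj X') g.f.f
      h := mapA_alg adj X.a.f (SX2 adj X) X'.a.f X'.A.a (SX2 adj X') g.f.f (hgalX adj g)
        (hXk3 adj X') (hXk4 adj X') }
  map_id X := by
    ext
    exact mapA_id adj X.a.f (SX2 adj X)
  map_comp {X X' X''} g g₂ := by
    ext
    exact mapA_comp adj X.a.f (SX2 adj X) X'.a.f (SX2 adj X') X''.a.f (SX2 adj X'')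
      g.f.f g₂.f.f (hgalX adj g)

/-- the functor from `T`-algebras to `M`-algebras -/
def F2 :
    Monad.Algebra adj.toMonad ⥤ Monad.Algebra (adj.toComonad.adj.toMonad) where
  obj P :=
    { A :=
      { A := L.obj P.A
        a := L.map (adj.unit.app P.A)
        counit := tri_L adj P.A
        coassoc := by
          show L.map (η' adj P.A) ≫ L.map (η' adj (R.obj (L.obj P.A))) =
            L.map (η' adj P.A) ≫ L.map (R.map (L.map (η' adj P.A)))
          rw [← L.map_comp, ← L.map_comp, η'_nat adj (η' adj P.A)] }
      a :=
      { f := L.map P.a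
        h := k3L adj P.a }
      unit := mkMunit adj _ _ (k4L adj P.a P.unit)
      assoc := mkMassoc adj _ _ (k5L adj P.a P.assoc) }
  map {P P'} f :=
    { f :=
      { f := L.map f.f
        h := by
          show L.map (η' adj P.A) ≫ L.map (R.map (L.map f.f)) =
            L.map f.f ≫ L.map (η' adj P'.A)
          rw [← L.map_comp, ← L.map_comp, ← η'_nat adj f.f] }
      h := by
        ext
        show L.map (R.map (L.map f.f)) ≫ L.map P'.a = L.map P.a ≫ L.map f.f
        exact (L.map_comp _ _).symm.trans ((congrArg L.map f.h).trans (L.map_comp _ _)) }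
  map_id P := by ext; exact L.map_id P.A
  map_comp f f' := by ext; exact L.map_comp f.f f'.f

end AssemblyTwo
end NucleusAux

namespace NucleusAux
variable {A : Type u₁} {B : Type u₂} [Category.{v₁} A] [Category.{v₂} B]
variable {L : A ⥤ B} {R : B ⥤ A} (adj : L ⊣ R)

section AssemblyTwoIso

lemma hXk2 (X : Monad.Algebra (adj.toComonad.adj.toMonad)) :
    X.A.a ≫ L.map (η' adj (R.obj X.A.A)) = X.A.a ≫ L.map (R.map X.A.a) :=
  X.A.coassoc

lemma hgcoX {X X' : Monad.Algebra (adj.toComonad.adj.toMonad)} (g : X ⟶ X') :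
    X.A.a ≫ L.map (R.map g.f.f) = g.f.f ≫ X'.A.a :=
  g.f.h

variable [IsIdempotentComplete A]

/-- unit iso for the second equivalence -/
noncomputable def unitIso2 :
    𝟭 (Monad.Algebra (adj.toComonad.adj.toMonad)) ≅ G2 adj ⋙ F2 adj :=
  NatIso.ofComponents
    (fun X => Monad.Algebra.isoMk
      (Comonad.Coalgebra.isoMk
        ⟨uM adj X.a.f X.A.a (SX2 adj X), vM adj X.a.f (SX2 adj X),
          uM_vM adj X.a.f X.A.a (SX2 adj X) (hXk3 adj X) (hXk4 adj X),
          vM_uM adj X.a.f X.A.a (SX2 adj X) (hXk3 adj X)⟩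
        (uM_coalg adj X.a.f X.A.a (SX2 adj X) (hXk2 adj X)))
      (by
        ext
        exact uM_alg adj X.a.f X.A.a (SX2 adj X) (hXk3 adj X) (hXk4 adj X)))
    (fun {X X'} g => by
      ext
      exact uM_nat adj X.a.f X.A.a (SX2 adj X) X'.a.f X'.A.a (SX2 adj X')
        (hXk3 adj X) (hXk4 adj X) g.f.f (hgcoX adj g))

/-- counit iso for the second equivalence -/
noncomputable def counitIso2 :
    F2 adj ⋙ G2 adj ≅ 𝟭 (Monad.Algebra adj.toMonad) :=
  NatIso.ofComponents
    (fun P => Monad.Algebra.isoMk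
      ⟨wM adj P.a (SX2 adj ((F2 adj).obj P)), wM' adj P.a (SX2 adj ((F2 adj).obj P)),
        wM_wM' adj P.a (SX2 adj ((F2 adj).obj P)),
        wM'_wM adj P.a P.unit (SX2 adj ((F2 adj).obj P))⟩
      (wM_alg adj P.a P.unit (SX2 adj ((F2 adj).obj P))))
    (fun {P P'} f => by
      ext
      exact wM_nat adj P.a P'.a (SX2 adj ((F2 adj).obj P)) (SX2 adj ((F2 adj).obj P'))
        P'.unit f.f f.h)

/-- the second equivalence -/
noncomputable def equiv2 :
    Monad.Algebra (adj.toComonad.adj.toMonad) ≌ Monad.Algebra adj.toMonad :=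
  CategoryTheory.Equivalence.mk (G2 adj) (F2 adj) (unitIso2 adj) (counitIso2 adj)

end AssemblyTwoIso
end NucleusAux


open CategoryTheory

/-- STATEMENT 5: if `A` and `B` are idempotent complete, then the Eilenberg–Moore category of
coalgebras for the comonad `K_T = forget_T ⋙ free_T` on `Alg(T)` is equivalent to `Coalg(W)`,
and the Eilenberg–Moore category of algebras for the monad `M_W = forget_W ⋙ cofree_W` on
`Coalg(W)` is equivalent to `Alg(T)`. -/
theorem nucleus_em_coalgebras_of_algebras
    {A : Type*} {B : Type*} [Category A] [Category B]
    (L : A ⥤ B) (R : B ⥤ A) (adj : L ⊣ R)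
    [IsIdempotentComplete A] [IsIdempotentComplete B] :
    Nonempty ((adj.toMonad.adj.toComonad).Coalgebra ≌ adj.toComonad.Coalgebra) ∧
    Nonempty ((adj.toComonad.adj.toMonad).Algebra ≌ adj.toMonad.Algebra) := by
  exact ⟨⟨NucleusAux.equiv1 adj⟩, ⟨NucleusAux.equiv2 adj⟩⟩
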